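/- There are no infinite chains of strictly more general first-order terms: the relation 'strictly more general than' (i.e., $t$ is an instance of $s$ under some substitution but $s$ is not an instance of $t$) is well-founded on terms. -/

import Mathlib

/-- First-order terms over a signature `F` indexed by arity, with variables. -/
inductive Tm (F : ℕ → Type) : Type
  | var : ℕ → Tm F
  | app : (n : ℕ) → F n → (Fin n → Tm F) → Tm F

/-- Application of a substitution (a map from variables to terms) to a term. -/
def subst {F : ℕ → Type} (σ : ℕ → Tm F) : Tm F → Tm F
  | .var x => σ x
  | .app n f ts => .app n f (fun i => subst σ (ts i))

/-- `s` is more general than `t` iff `t` is an instance of `s`, i.e. `s θ = t`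
for some substitution `θ`. -/
def MoreGeneral {F : ℕ → Type} (s t : Tm F) : Prop := ∃ σ, subst σ s = t

/-- `s` is strictly more general than `t`. -/
def StrictlyMoreGeneral {F : ℕ → Type} (s t : Tm F) : Prop :=
  MoreGeneral s t ∧ ¬ MoreGeneral t s

namespace TmAux

variable {F : ℕ → Type}

def size : Tm F → ℕ
  | .var _ => 1
  | .app n _ ts => 1 + ∑ i : Fin n, size (ts i)

def vars : Tm F → Finset ℕ
  | .var x => {x}
  | .app n _ ts => Finset.univ.biUnion fun i : Fin n => vars (ts i)

lemma one_le_size (s : Tm F) : 1 ≤ size s := by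
  cases s with
  | var x => simp [size]
  | app n f ts => simp [size]

lemma card_vars_le_size (s : Tm F) : (vars s).card ≤ size s := by
  induction s with
  | var x => simp [size, vars]
  | app n f ts ih =>
    simp only [size, vars]
    calc (Finset.univ.biUnion fun i : Fin n => vars (ts i)).card
        ≤ ∑ i : Fin n, (vars (ts i)).card := Finset.card_biUnion_le
      _ ≤ ∑ i : Fin n, size (ts i) := Finset.sum_le_sum (fun i _ => ih i)
      _ ≤ 1 + ∑ i : Fin n, size (ts i) := Nat.le_add_left _ _

lemma size_le_size_subst (σ : ℕ → Tm F) (s : Tm F) : size s ≤ size (subst σ s) := by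
  induction s with
  | var x => simpa [size, subst] using one_le_size (σ x)
  | app n f ts ih =>
    simp only [size, subst]
    exact Nat.add_le_add_left (Finset.sum_le_sum fun i _ => ih i) 1

lemma subst_subst (σ τ : ℕ → Tm F) (s : Tm F) :
    subst τ (subst σ s) = subst (fun x => subst τ (σ x)) s := by
  induction s with
  | var x => rfl
  | app n f ts ih => simp [subst, funext_iff] at *; exact ih

lemma subst_congr {σ τ : ℕ → Tm F} {s : Tm F} (h : ∀ x ∈ vars s, σ x = τ x) :
    subst σ s = subst τ s := by
  induction s with
  | var x => exact h x (by simp [vars])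
  | app n f ts ih =>
    simp only [subst, Tm.app.injEq, heq_eq_eq, true_and]
    funext i
    exact ih i fun x hx => h x (by simp [vars]; exact ⟨i, hx⟩)

lemma subst_var (s : Tm F) : subst Tm.var s = s := by
  induction s with
  | var x => rfl
  | app n f ts ih => simp [subst, funext_iff]; exact ih

lemma size_subst_eq_one {σ : ℕ → Tm F} {s : Tm F}
    (h : size (subst σ s) = size s) : ∀ x ∈ vars s, size (σ x) = 1 := by
  induction s with
  | var x =>
    intro z hz
    simp only [vars, Finset.mem_singleton] at hz
    subst hz
    simpa [subst, size] using h
  | app n f ts ih =>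
    intro z hz
    simp only [vars, Finset.mem_biUnion, Finset.mem_univ, true_and] at hz
    obtain ⟨i, hi⟩ := hz
    simp only [subst, size] at h
    have h' : ∑ i : Fin n, size (ts i) = ∑ i : Fin n, size (subst σ (ts i)) :=
      (Nat.add_left_cancel h).symm
    have heach : ∀ j ∈ (Finset.univ : Finset (Fin n)),
        size (ts j) = size (subst σ (ts j)) :=
      (Finset.sum_eq_sum_iff_of_le (fun j _ => size_le_size_subst σ (ts j))).mp h'
    exact ih i (heach i (Finset.mem_univ i)).symm z hi

lemma is_var_of_size_card {u : Tm F} (h1 : size u = 1) (h2 : (vars u).card = 1) :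
    ∃ y, u = Tm.var y := by
  cases u with
  | var y => exact ⟨y, rfl⟩
  | app n f ts =>
    exfalso
    have hn : n = 0 := by
      by_contra hn
      have hpos : 0 < n := Nat.pos_of_ne_zero hn
      have hs : 1 ≤ ∑ i : Fin n, size (ts i) :=
        le_trans (one_le_size (ts ⟨0, hpos⟩))
          (Finset.single_le_sum (f := fun i : Fin n => size (ts i))
            (fun i _ => Nat.zero_le _) (Finset.mem_univ (⟨0, hpos⟩ : Fin n)))
      simp only [size] at h1
      omega
    subst hn
    simp [vars] at h2

lemma vars_subst (σ : ℕ → Tm F) (s : Tm F) :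
    vars (subst σ s) = (vars s).biUnion fun x => vars (σ x) := by
  induction s with
  | var x => simp [subst, vars]
  | app n f ts ih =>
    simp only [subst, vars]
    ext y
    simp only [Finset.mem_biUnion, Finset.mem_univ, true_and]
    constructor
    · rintro ⟨i, hy⟩
      rw [ih i] at hy
      simp only [Finset.mem_biUnion] at hy
      obtain ⟨x, hx, hy⟩ := hy
      exact ⟨x, ⟨i, hx⟩, hy⟩
    · rintro ⟨x, ⟨i, hx⟩, hy⟩
      refine ⟨i, ?_⟩
      rw [ih i]
      exact Finset.mem_biUnion.mpr ⟨x, hx, hy⟩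

/-- Key decrease lemma. -/
lemma measure_decrease {s t : Tm F} (h : StrictlyMoreGeneral s t) :
    size s < size t ∨ (size s = size t ∧ (vars t).card < (vars s).card) := by
  classical
  obtain ⟨⟨σ, hσ⟩, hnot⟩ := h
  have hle : size s ≤ size t := hσ ▸ size_le_size_subst σ s
  rcases lt_or_eq_of_le hle with hlt | heq
  · exact Or.inl hlt
  · right
    refine ⟨heq, ?_⟩
    have hone : ∀ x ∈ vars s, size (σ x) = 1 :=
      size_subst_eq_one (by rw [hσ, heq])
    have hvt : vars t = (vars s).biUnion fun x => vars (σ x) := by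
      rw [← hσ, vars_subst]
    have hcard_le1 : (vars t).card ≤ ∑ x ∈ vars s, (vars (σ x)).card := by
      rw [hvt]; exact Finset.card_biUnion_le
    have hcard_le2 : ∑ x ∈ vars s, (vars (σ x)).card ≤ (vars s).card := by
      calc ∑ x ∈ vars s, (vars (σ x)).card
          ≤ ∑ x ∈ vars s, 1 := Finset.sum_le_sum fun x hx =>
            (card_vars_le_size (σ x)).trans (le_of_eq (hone x hx))
        _ = (vars s).card := by simp
    rcases lt_or_eq_of_le (hcard_le1.trans hcard_le2) with h' | h'
    · exact h'
    · exfalso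
      -- all cards are 1, so every σ x (x ∈ vars s) is a variable
      have hsum : ∑ x ∈ vars s, (vars (σ x)).card = ∑ x ∈ vars s, 1 := by
        have h2 : (vars s).card ≤ ∑ x ∈ vars s, (vars (σ x)).card := h' ▸ hcard_le1
        simp only [Finset.sum_const, smul_eq_mul, mul_one]
        omega
      have hcard1 : ∀ x ∈ vars s, (vars (σ x)).card = 1 :=
        (Finset.sum_eq_sum_iff_of_le fun x hx =>
          (card_vars_le_size (σ x)).trans (le_of_eq (hone x hx))).mp hsum
      have hvar : ∀ x ∈ vars s, ∃ y, σ x = Tm.var y := fun x hx =>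
        is_var_of_size_card (hone x hx) (hcard1 x hx)
      have : ∃ f : ℕ → ℕ, ∀ x ∈ vars s, σ x = Tm.var (f x) := by
        refine ⟨fun x => if h : x ∈ vars s then (hvar x h).choose else 0, ?_⟩
        intro x hx
        simp only [dif_pos hx]
        exact (hvar x hx).choose_spec
      obtain ⟨f, hf⟩ := this
      have himg : vars t = (vars s).image f := by
        rw [hvt]
        ext y
        simp only [Finset.mem_biUnion, Finset.mem_image]
        constructor
        · rintro ⟨x, hx, hy⟩
          rw [hf x hx] at hy
          simp only [vars, Finset.mem_singleton] at hy
          exact ⟨x, hx, hy.symm⟩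
        · rintro ⟨x, hx, hy⟩
          exact ⟨x, hx, by rw [hf x hx]; simp [vars, hy]⟩
      have hinj : Set.InjOn f (vars s) := by
        apply Finset.injOn_of_card_image_eq
        rw [← himg, h']
      apply hnot
      refine ⟨fun y => Tm.var (Function.invFunOn f (vars s) y), ?_⟩
      rw [← hσ, subst_subst]
      have hagree : ∀ x ∈ vars s,
          (fun x => subst (fun y => Tm.var (Function.invFunOn f (vars s) y)) (σ x)) x
            = Tm.var x := by
        intro x hx
        simp only [hf x hx, subst]
        congr 1
        exact hinj (Function.invFunOn_mem ⟨x, hx, rfl⟩)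
          hx (Function.invFunOn_eq ⟨x, hx, rfl⟩)
      rw [subst_congr hagree, subst_var]

end TmAux

/-- there are no infinite chains of strictly more general terms:
the relation 'strictly more general than' is well-founded (Huet 1980). -/
theorem strictlyMoreGeneral_wf {F : ℕ → Type} :
    WellFounded (fun s t : Tm F => StrictlyMoreGeneral s t) := by
  have hwf : WellFounded (InvImage (Prod.Lex (· < ·) (· < ·))
      (fun t : Tm F => (TmAux.size t, TmAux.size t - (TmAux.vars t).card))) :=
    InvImage.wf _ (WellFounded.prod_lex wellFounded_lt wellFounded_lt)
  refine Subrelation.wf (h₂ := hwf) ?_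
  intro s t h
  rcases TmAux.measure_decrease h with hlt | ⟨heq, hcard⟩
  · exact Prod.Lex.left _ _ hlt
  · have h1 : (TmAux.vars s).card ≤ TmAux.size s := TmAux.card_vars_le_size s
    show Prod.Lex (· < ·) (· < ·)
      (TmAux.size s, TmAux.size s - (TmAux.vars s).card)
      (TmAux.size t, TmAux.size t - (TmAux.vars t).card)
    rw [heq]
    exact Prod.Lex.right _ (by omega)
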